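/- In a canonical game of 2m rounds (m ≥ 1) on ℂ^n, if both players use the same action group, i.e. A = B is a subgroup of the unitary group U(n) that contains every n×n permutation matrix, then player 2 has no strong winning strategy: for every sequence B_1, …, B_m ∈ B there exists a sequence A_1, …, A_m ∈ A such that B_m A_m ⋯ B_1 A_1 e_{q0} ≠ e_{qB}. -/

import Mathlib

/-- The product of the moves in a canonical `2m`-round game, namely
`B_m * A_m * ⋯ * B_1 * A_1`, where player 1 plays `A_1, …, A_m` at odd rounds and
player 2 plays `B_1, …, B_m` at even rounds. -/
noncomputable def canonicalProd {n m : ℕ} (As Bs : Fin m → Matrix (Fin n) (Fin n) ℂ) :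
    Matrix (Fin n) (Fin n) ℂ :=
  ((List.ofFn fun i => Bs i * As i).reverse).prod

/-- The product of the moves in a noncanonical `2m+1`-round game, namely
`A_{m+1} * B_m * A_m * ⋯ * B_1 * A_1`, where player 1 makes the first and the
last move. -/
noncomputable def noncanonicalProd {n m : ℕ} (As : Fin (m + 1) → Matrix (Fin n) (Fin n) ℂ)
    (Bs : Fin m → Matrix (Fin n) (Fin n) ℂ) : Matrix (Fin n) (Fin n) ℂ :=
  As (Fin.last m) * ((List.ofFn fun i : Fin m => Bs i * As i.castSucc).reverse).prod

/-- The underlying matrix of an element of a subgroup of the unitary group. -/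
noncomputable def toMat {n : ℕ} {G : Subgroup (Matrix.unitaryGroup (Fin n) ℂ)} (x : G) :
    Matrix (Fin n) (Fin n) ℂ :=
  ((x : Matrix.unitaryGroup (Fin n) ℂ) : Matrix (Fin n) (Fin n) ℂ)

/-- `G` contains (the standard matrix representation of) the symmetric group `S_n`:
every `n × n` permutation matrix belongs to `G`. -/
def containsSn {n : ℕ} (G : Subgroup (Matrix.unitaryGroup (Fin n) ℂ)) : Prop :=
  ∀ σ : Equiv.Perm (Fin n), ∃ P ∈ G,
    ((P : Matrix.unitaryGroup (Fin n) ℂ) : Matrix (Fin n) (Fin n) ℂ) = σ.permMatrix ℂ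

/-- Telescoping: player 1 can force the product to be `B_m * P` for any fixed `P`. -/
lemma telescope_aux {G : Type*} [Group G] (m : ℕ) (Bs : Fin (m+1) → G) (P : G) :
    ∃ As : Fin (m+1) → G,
      ((List.ofFn fun i => Bs i * As i).reverse).prod = Bs (Fin.last m) * P := by
  induction m with
  | zero => exact ⟨fun _ => P, by simp⟩
  | succ m ih =>
    obtain ⟨As', h'⟩ := ih (fun i => Bs i.castSucc)
    refine ⟨Fin.snoc As' (P * (Bs (Fin.last m).castSucc * P)⁻¹), ?_⟩
    rw [List.ofFn_succ']
    simp only [Fin.snoc_castSucc, Fin.snoc_last, List.concat_eq_append,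
      List.reverse_append, List.reverse_cons, List.reverse_nil, List.nil_append,
      List.singleton_append, List.prod_cons, h']
    group

/-- `toMat` as a monoid hom. -/
noncomputable def toMatHom {n : ℕ} (G : Subgroup (Matrix.unitaryGroup (Fin n) ℂ)) :
    G →* Matrix (Fin n) (Fin n) ℂ :=
  ((unitary (Matrix (Fin n) (Fin n) ℂ)).subtype).comp G.subtype

lemma canonicalProd_toMat {n m : ℕ} (G : Subgroup (Matrix.unitaryGroup (Fin n) ℂ))
    (As Bs : Fin m → G) :
    canonicalProd (fun i => toMat (As i)) (fun i => toMat (Bs i))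
      = toMatHom G ((List.ofFn fun i => Bs i * As i).reverse).prod := by
  unfold canonicalProd
  rw [map_list_prod (toMatHom G), List.map_reverse, List.map_ofFn]
  rfl

lemma permMatrix_mulVec_single {n : ℕ} (σ : Equiv.Perm (Fin n)) (q0 : Fin n) :
    (σ.permMatrix ℂ).mulVec (Pi.single q0 1) = Pi.single (σ⁻¹ q0) 1 := by
  ext i
  simp only [Equiv.Perm.permMatrix, Matrix.mulVec_single, PEquiv.toMatrix_apply,
    Equiv.toPEquiv_apply, Option.mem_def, Option.some.injEq, mul_one, Pi.single_apply]
  simp only [MulOpposite.op_one, one_smul, Matrix.col_apply, PEquiv.toMatrix_apply,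
    Equiv.toPEquiv_apply, Option.mem_def, Option.some.injEq]
  congr 1
  exact propext Equiv.Perm.eq_inv_iff_eq.symm

lemma unitary_mulVec_injective {n : ℕ} (u : Matrix.unitaryGroup (Fin n) ℂ)
    {x y : Fin n → ℂ}
    (h : (u : Matrix (Fin n) (Fin n) ℂ).mulVec x = (u : Matrix (Fin n) (Fin n) ℂ).mulVec y) :
    x = y := by
  have h2 := congrArg (fun v => (star (u : Matrix (Fin n) (Fin n) ℂ)).mulVec v) h
  simpa [Matrix.mulVec_mulVec, Matrix.UnitaryGroup.star_mul_self] using h2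

/-- In a canonical game of `2m` rounds on `ℂ^n`, if both players use the same action
group containing every permutation matrix, then player 2 has no strong winning
strategy. -/
theorem canonical_same_group_no_sws_player2
    (n m : ℕ) (hn : 2 ≤ n) (hm : 1 ≤ m)
    (A B : Subgroup (Matrix.unitaryGroup (Fin n) ℂ)) (hAB : A = B) (hSn : containsSn B)
    (q0 qA qB : Fin n) (hq : qA ≠ qB)
    (Bs : Fin m → B) :
    ∃ As : Fin m → A,
      (canonicalProd (fun i => toMat (As i)) (fun i => toMat (Bs i))).mulVec
        (Pi.single q0 1) ≠ Pi.single qB 1 := by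
  subst hAB
  obtain ⟨k, rfl⟩ : ∃ k, m = k + 1 := ⟨m - 1, by omega⟩
  set u : Matrix.unitaryGroup (Fin n) ℂ := (Bs (Fin.last k) : Matrix.unitaryGroup (Fin n) ℂ)
  -- choose a permutation σ such that player 1 wins with it
  have hkey : ∃ σ : Equiv.Perm (Fin n),
      (u : Matrix (Fin n) (Fin n) ℂ).mulVec (Pi.single (σ⁻¹ q0) 1) ≠ Pi.single qB 1 := by
    obtain ⟨r, hr⟩ : ∃ r : Fin n, r ≠ q0 :=
      Fintype.exists_ne_of_one_lt_card (by simpa using (show 1 < n by omega)) q0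
    by_contra hcon
    push_neg at hcon
    have h1 := hcon 1
    have h2 := hcon (Equiv.swap q0 r)
    simp only [inv_one, Equiv.Perm.one_apply, Equiv.swap_inv] at h1 h2
    rw [Equiv.swap_apply_left] at h2
    have := unitary_mulVec_injective u (h1.trans h2.symm)
    have := congrFun this q0
    simp [Pi.single_apply, hr.symm] at this
  obtain ⟨σ, hσ⟩ := hkey
  obtain ⟨P, hPmem, hPmat⟩ := hSn σ
  obtain ⟨As, hAs⟩ := telescope_aux k Bs (⟨P, hPmem⟩ : A)
  refine ⟨As, ?_⟩
  rw [canonicalProd_toMat, hAs]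
  have : toMatHom A (Bs (Fin.last k) * ⟨P, hPmem⟩)
      = (u : Matrix (Fin n) (Fin n) ℂ) * σ.permMatrix ℂ := by
    rw [map_mul]
    congr 1
  rw [this, ← Matrix.mulVec_mulVec, permMatrix_mulVec_single]
  exact hσ
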